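/- Let A be a commutative ring, and let f, g₁, …, g_m ∈ A be non-zero-divisors. Let M• be a cochain complex of A-modules on each term of which multiplication by f is injective. If f divides g_i for every 1 ≤ i ≤ m, then there is an isomorphism of cochain complexes of A-modules η_f(M• ⊗_A Kos_A(g₁, …, g_m)) ≅ η_f(M•) ⊗_A Kos_A(g₁/f, …, g_m/f), where g_i/f denotes the unique element of A with f·(g_i/f) = g_i. -/

import Mathlib

/-!
Décalage and Koszul complexes, after Bhatt–Morrow–Scholze (Lemma 7.9 (ii)).

A cochain complex of `A`-modules is presented as an `A`-module `M` together with a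
differential `d : M →ₗ[A] M` with `d ∘ d = 0` and an internal grading
`G : ℤ → Submodule A M` (so `Mⁱ = G i`) with `d (G i) ⊆ G (i+1)`.

The tensor product `M• ⊗_A Kos_A(g₁, …, g_m)` with the Koszul complex (the tensor product of
the two-term complexes `A →^{gᵢ} A` in cohomological degrees 0 and 1) is presented as the
module `Finset (Fin m) → M` of coefficients of the Koszul basis vectors `e_S`, with
degree-`n` graded piece `{ ξ | ξ_S ∈ M^{n - |S|} }` and total (Koszul-sign) differential
`(Dξ)_S = (-1)^{|S|}·d(ξ_S) + ∑_{i ∈ S} (-1)^{#{j ∈ S : j < i}} gᵢ·ξ_{S \ {i}}`.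

The décalage `η_f` is applied to such complexes via their localized total module, and
`η_f(M•)` is itself a cochain complex graded by the submodules `etaDeg f d G n` of `M[1/f]`,
with differential the localized differential; so `η_f(M•) ⊗_A Kos_A(g₁/f, …, g_m/f)` is
presented on `Finset (Fin m) → M[1/f]` with grading `koszulGrading (etaDeg f d G)` and
differential `koszulD (locDiff f d) (g/f)`.
-/

universe u

open LocalizedModule

section Decalage

variable {A : Type u} [CommRing A]

/-- The image of `f` in the localization `A[1/f]`, as a unit. -/
noncomputable def fUnit (f : A) : (Localization (Submonoid.powers f))ˣ :=
  (IsLocalization.map_units (Localization (Submonoid.powers f))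
    (⟨f, Submonoid.mem_powers f⟩ : Submonoid.powers f)).unit

variable (f : A) {M : Type u} [AddCommGroup M] [Module A M]

/-- Multiplication by `f ^ j` (for `j : ℤ`) on `M[1/f]`, as an `A`-linear map. -/
noncomputable def fzpow (j : ℤ) :
    LocalizedModule (Submonoid.powers f) M →ₗ[A] LocalizedModule (Submonoid.powers f) M where
  toFun α := ((fUnit f ^ j : (Localization (Submonoid.powers f))ˣ) :
      Localization (Submonoid.powers f)) • α
  map_add' a b := smul_add _ a b
  map_smul' a α := by
    simp only [RingHom.id_apply]
    rw [← algebraMap_smul (Localization (Submonoid.powers f)) a α,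
      ← algebraMap_smul (Localization (Submonoid.powers f)) a
        (((fUnit f ^ j : (Localization (Submonoid.powers f))ˣ) :
          Localization (Submonoid.powers f)) • α),
      smul_smul, smul_smul, mul_comm]

/-- The localization `d[1/f] : M[1/f] → M[1/f]` of the differential `d`. -/
noncomputable def locDiff (d : M →ₗ[A] M) :
    LocalizedModule (Submonoid.powers f) M →ₗ[A] LocalizedModule (Submonoid.powers f) M :=
  IsLocalizedModule.map (Submonoid.powers f)
    (mkLinearMap (Submonoid.powers f) M) (mkLinearMap (Submonoid.powers f) M) d

variable (d : M →ₗ[A] M) (G : ℤ → Submodule A M)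

/-- The degree-`n` term `η_f(M)ⁿ = { α ∈ fⁿ·Mⁿ : dα ∈ f^{n+1}·M^{n+1} }` of the décalage
complex, as a submodule of `M[1/f]`; here `Mⁿ = G n` is the degree-`n` graded piece. -/
noncomputable def etaDeg (n : ℤ) :
    Submodule A (LocalizedModule (Submonoid.powers f) M) :=
  (G n).map ((fzpow f n).comp (mkLinearMap (Submonoid.powers f) M)) ⊓
    ((G (n + 1)).map ((fzpow f (n + 1)).comp (mkLinearMap (Submonoid.powers f) M))).comap
      (locDiff f d)

end Decalage

section Koszul

variable {A : Type u} [CommRing A] {M : Type u} [AddCommGroup M] [Module A M] {m : ℕ}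

/-- The total differential of `M• ⊗_A Kos_A(g₁, …, g_m)`, on the module
`Finset (Fin m) → M` of coefficients of the Koszul basis vectors `e_S`:
`(Dξ)_S = (-1)^{|S|}·d(ξ_S) + ∑_{i ∈ S} (-1)^{#{j ∈ S : j < i}}·gᵢ·ξ_{S \ {i}}`. -/
noncomputable def koszulD (d : M →ₗ[A] M) (g : Fin m → A) :
    (Finset (Fin m) → M) →ₗ[A] (Finset (Fin m) → M) where
  toFun ξ S := ((-1 : A) ^ S.card) • d (ξ S) +
    ∑ i ∈ S, (((-1 : A) ^ (S.filter fun j => j < i).card) * g i) • ξ (S.erase i)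
  map_add' ξ ζ := by
    funext S
    simp only [Pi.add_apply, map_add, smul_add, Finset.sum_add_distrib]
    abel
  map_smul' a ξ := by
    funext S
    simp only [Pi.smul_apply, map_smul, RingHom.id_apply, smul_add, Finset.smul_sum,
      smul_comm a]

/-- The degree-`n` graded piece of `M• ⊗_A Kos_A(g₁, …, g_m)`:
those `ξ` with `ξ_S ∈ M^{n - |S|}` for all `S`. -/
def koszulGrading (G : ℤ → Submodule A M) (n : ℤ) : Submodule A (Finset (Fin m) → M) where
  carrier := {ξ | ∀ S : Finset (Fin m), ξ S ∈ G (n - S.card)}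
  add_mem' := fun ha hb S => (G _).add_mem (ha S) (hb S)
  zero_mem' := fun S => (G _).zero_mem
  smul_mem' := fun a ξ hξ S => (G _).smul_mem a (hξ S)

end Koszul

section Helpers

variable {A : Type u} [CommRing A] (f : A) {M : Type u} [AddCommGroup M] [Module A M]

local notation "Sf" => Submonoid.powers f
local notation "LocM" => LocalizedModule (Submonoid.powers f) M

lemma fUnit_val : ((fUnit f : (Localization Sf)ˣ) : Localization Sf) = algebraMap A _ f := rfl

lemma fzpow_apply (j : ℤ) (x : LocM) :
    fzpow f j x = ((fUnit f ^ j : (Localization Sf)ˣ) : Localization Sf) • x := rfl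

lemma smul_comm_loc (a : A) (c : Localization Sf) (x : LocM) :
    a • c • x = c • a • x := by
  rw [← algebraMap_smul (Localization Sf) a x,
    ← algebraMap_smul (Localization Sf) a (c • x), smul_smul, smul_smul, mul_comm]

lemma fzpow_fzpow (i j : ℤ) (x : LocM) : fzpow f i (fzpow f j x) = fzpow f (i + j) x := by
  rw [fzpow_apply, fzpow_apply, fzpow_apply, smul_smul, ← Units.val_mul, ← zpow_add]

lemma fzpow_zero_apply (x : LocM) : fzpow f 0 x = x := by
  rw [fzpow_apply, zpow_zero, Units.val_one, one_smul]

/-- `mk · s` as a linear map. -/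
noncomputable def mkL (s : Sf) : M →ₗ[A] LocM where
  toFun x := LocalizedModule.mk x s
  map_add' a b := by
    show LocalizedModule.mk (a+b) s = LocalizedModule.mk a s + LocalizedModule.mk b s
    rw [IsLocalizedModule.mk_eq_mk', IsLocalizedModule.mk_eq_mk', IsLocalizedModule.mk_eq_mk',
      IsLocalizedModule.mk'_add]
  map_smul' a x := by
    show LocalizedModule.mk (a • x) s = a • LocalizedModule.mk x s
    rw [ IsLocalizedModule.mk_eq_mk', IsLocalizedModule.mk_eq_mk',
      IsLocalizedModule.mk'_smul]

@[simp] lemma mkL_apply (s : Sf) (x : M) : mkL f s x = LocalizedModule.mk x s := rfl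

lemma locDiff_mk (d : M →ₗ[A] M) (x : M) (s : Sf) :
    locDiff f d (LocalizedModule.mk x s) = LocalizedModule.mk (d x) s := by
  rw [IsLocalizedModule.mk_eq_mk', IsLocalizedModule.mk_eq_mk', locDiff,
    IsLocalizedModule.map_mk']

lemma locDiff_loc_smul (d : M →ₗ[A] M) (c : Localization Sf) (x : LocM) :
    locDiff f d (c • x) = c • locDiff f d x := by
  induction x using LocalizedModule.induction_on with
  | _ m s =>
    induction c using Localization.induction_on with
    | _ p =>
      rw [LocalizedModule.mk_smul_mk,
        locDiff_mk, locDiff_mk, LocalizedModule.mk_smul_mk, map_smul]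

lemma locDiff_fzpow (d : M →ₗ[A] M) (j : ℤ) (x : LocM) :
    locDiff f d (fzpow f j x) = fzpow f j (locDiff f d x) := by
  rw [fzpow_apply, fzpow_apply, locDiff_loc_smul]

end Helpers

section PiLoc

variable {A : Type u} [CommRing A] (f : A) {M : Type u} [AddCommGroup M] [Module A M]
  {m : ℕ}

local notation "Sf" => Submonoid.powers f
local notation "LocM" => LocalizedModule (Submonoid.powers f) M
local notation "ι" => Finset (Fin m)

lemma smul_injective_loc (s : Sf) :
    Function.Injective fun x : LocM => (s : A) • x := by
  have h := IsLocalizedModule.map_units (LocalizedModule.mkLinearMap Sf M) s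
  rw [Module.End.isUnit_iff] at h
  intro x y hxy
  exact h.injective (by simpa [Module.algebraMap_end_apply] using hxy)

lemma pi_units (s : Sf) :
    IsUnit (algebraMap A (Module.End A (ι → LocM)) (s : A)) := by
  rw [Module.End.isUnit_iff]
  constructor
  · intro x y hxy
    funext i
    apply smul_injective_loc f s
    simpa [Module.algebraMap_end_apply] using congrFun hxy i
  · intro x
    have hx : ∀ i, ∃ p : M × Sf, x i = LocalizedModule.mk p.1 p.2 := fun i =>
      LocalizedModule.induction_on (fun mm ss => ⟨(mm, ss), rfl⟩) (x i)
    choose p hp using hx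
    refine ⟨fun i => LocalizedModule.mk (p i).1 (s * (p i).2), ?_⟩
    funext i
    simp only [Module.algebraMap_end_apply, Pi.smul_apply, hp i]
    rw [LocalizedModule.smul'_mk, ← Submonoid.smul_def, LocalizedModule.mk_cancel_common_left]

/-- Localization of a finite product is the product of localizations. -/
noncomputable def locPi : LocalizedModule Sf (ι → M) →ₗ[A] (ι → LocM) :=
  LocalizedModule.lift Sf
    (LinearMap.pi fun i => (LocalizedModule.mkLinearMap Sf M).comp (LinearMap.proj i))
    (fun s => pi_units f s)

lemma locPi_mk (ξ : ι → M) (s : Sf) :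
    locPi (M := M) (m := m) f (LocalizedModule.mk ξ s) = fun i => LocalizedModule.mk (ξ i) s := by
  have hinj : Function.Injective fun x : ι → LocM => (s : A) • x := by
    intro x y hxy
    funext i
    exact smul_injective_loc f s (congrFun hxy i)
  apply hinj
  show (s : A) • locPi (M := M) (m := m) f (LocalizedModule.mk ξ s) = (s : A) • fun i => LocalizedModule.mk (ξ i) s
  have h1 : (s : A) • locPi (M := M) (m := m) f (LocalizedModule.mk ξ s)
      = locPi (M := M) (m := m) f (LocalizedModule.mk ξ (1 : Sf)) := by
    rw [← map_smul, LocalizedModule.smul'_mk, ← Submonoid.smul_def, LocalizedModule.mk_cancel]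
  have h2 : locPi (M := M) (m := m) f (LocalizedModule.mk ξ (1 : Sf)) = fun i => LocalizedModule.mk (ξ i) 1 := by
    have h3 := LinearMap.congr_fun (LocalizedModule.lift_comp Sf
      (LinearMap.pi fun i => (LocalizedModule.mkLinearMap Sf M).comp
        (LinearMap.proj (φ := fun _ : ι => M) i))
      (fun s => pi_units f s)) ξ
    exact h3
  rw [h1, h2]
  funext i
  rw [Pi.smul_apply, LocalizedModule.smul'_mk, ← Submonoid.smul_def, LocalizedModule.mk_cancel]

lemma locPi_bijective : Function.Bijective (locPi (M := M) (m := m) f) := by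
  constructor
  · intro x y hxy
    induction x using LocalizedModule.induction_on with
    | _ ξ s =>
      induction y using LocalizedModule.induction_on with
      | _ ζ t =>
        rw [locPi_mk, locPi_mk] at hxy
        have h1 : ∀ i, ∃ u : Sf, u • t • ξ i = u • s • ζ i := fun i =>
          LocalizedModule.mk_eq.mp (congrFun hxy i)
        choose u hu using h1
        refine LocalizedModule.mk_eq.mpr ⟨∏ i, u i, ?_⟩
        funext i
        have h2 : (∏ j, u j) = (∏ j ∈ Finset.univ.erase i, u j) * u i :=
          (Finset.prod_erase_mul _ _ (Finset.mem_univ i)).symm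
        simp only [Pi.smul_apply]
        rw [h2, mul_smul, mul_smul, hu i]
  · intro x
    have hx : ∀ i, ∃ p : M × Sf, x i = LocalizedModule.mk p.1 p.2 := fun i =>
      LocalizedModule.induction_on (fun mm ss => ⟨(mm, ss), rfl⟩) (x i)
    choose p hp using hx
    refine ⟨LocalizedModule.mk
      (fun i => ((∏ j ∈ Finset.univ.erase i, (p j).2 : Sf) : A) • (p i).1)
      (∏ j, (p j).2), ?_⟩
    rw [locPi_mk]
    funext i
    rw [hp i]
    rw [LocalizedModule.mk_eq]
    refine ⟨1, ?_⟩
    simp only [one_smul, Submonoid.smul_def, smul_smul, ← Submonoid.coe_mul]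
    congr 2
    exact Finset.mul_prod_erase Finset.univ (fun j => (p j).2) (Finset.mem_univ i)

/-- The product-of-localizations equivalence. -/
noncomputable def locPiEquiv :
    LocalizedModule Sf (ι → M) ≃ₗ[A] (ι → LocM) :=
  LinearEquiv.ofBijective (locPi (M := M) (m := m) f) (locPi_bijective f)

lemma locPiEquiv_mk (ξ : ι → M) (s : Sf) :
    locPiEquiv (M := M) (m := m) f (LocalizedModule.mk ξ s) = fun i => LocalizedModule.mk (ξ i) s :=
  locPi_mk f ξ s

lemma locPiEquiv_loc_smul (c : Localization Sf) (x : LocalizedModule Sf (ι → M)) :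
    locPiEquiv (M := M) (m := m) f (c • x) = c • locPiEquiv (M := M) (m := m) f x := by
  induction x using LocalizedModule.induction_on with
  | _ ξ s =>
    induction c using Localization.induction_on with
    | _ q =>
      rw [LocalizedModule.mk_smul_mk, locPiEquiv_mk, locPiEquiv_mk]
      funext i
      show LocalizedModule.mk (q.1 • ξ i) (q.2 * s)
        = Localization.mk q.1 q.2 • LocalizedModule.mk (ξ i) s
      rw [LocalizedModule.mk_smul_mk]

end PiLoc

section Compare

variable {A : Type u} [CommRing A] (f : A) {M : Type u} [AddCommGroup M] [Module A M] {m : ℕ}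

local notation "Sf" => Submonoid.powers f
local notation "LocM" => LocalizedModule (Submonoid.powers f) M
local notation "ι" => Finset (Fin m)

lemma koszulD_apply (d : M →ₗ[A] M) (g : Fin m → A) (ξ : ι → M) (S : ι) :
    koszulD d g ξ S = ((-1 : A) ^ S.card) • d (ξ S) +
      ∑ i ∈ S, (((-1 : A) ^ (S.filter fun j => j < i).card) * g i) • ξ (S.erase i) := rfl

/-- `fzpow` as a linear equivalence. -/
noncomputable def fzpowEquiv (j : ℤ) : LocM ≃ₗ[A] LocM :=
  LinearEquiv.ofLinear (fzpow f j) (fzpow f (-j))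
    (LinearMap.ext fun x => by
      rw [LinearMap.comp_apply, fzpow_fzpow, LinearMap.id_apply,
        show j + -j = 0 by omega, fzpow_zero_apply])
    (LinearMap.ext fun x => by
      rw [LinearMap.comp_apply, fzpow_fzpow, LinearMap.id_apply,
        show -j + j = 0 by omega, fzpow_zero_apply])

/-- The comparison equivalence `(M ⊗ Kos)[1/f] ≃ (Finset (Fin m)) → M[1/f]`, with the
`f^{-|S|}` twist. -/
noncomputable def Teq :
    LocalizedModule Sf (ι → M) ≃ₗ[A] (ι → LocM) :=
  (locPiEquiv (M := M) (m := m) f).trans (LinearEquiv.piCongrRight fun S : ι => fzpowEquiv f (-(S.card : ℤ)))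

lemma Teq_apply (x : LocalizedModule Sf (ι → M)) (S : ι) :
    Teq (M := M) (m := m) f x S = fzpow f (-(S.card : ℤ)) (locPiEquiv (M := M) (m := m) f x S) := rfl

lemma fzpow_loc_smul (j : ℤ) (c : Localization Sf) (x : LocM) :
    fzpow f j (c • x) = c • fzpow f j x := by
  rw [fzpow_apply, fzpow_apply, smul_smul, mul_comm, ← smul_smul]

lemma Teq_loc_smul (c : Localization Sf) (x : LocalizedModule Sf (ι → M)) :
    Teq (M := M) (m := m) f (c • x) = c • Teq (M := M) (m := m) f x := by
  funext S
  rw [Teq_apply, locPiEquiv_loc_smul, Pi.smul_apply, fzpow_loc_smul, Pi.smul_apply, Teq_apply]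

lemma f_smul_fzpow (j : ℤ) (y : LocM) : f • fzpow f j y = fzpow f (j + 1) y := by
  rw [← algebraMap_smul (Localization Sf) f (fzpow f j y), ← fUnit_val, fzpow_apply,
    fzpow_apply, smul_smul, ← Units.val_mul, mul_comm, ← zpow_add_one]

set_option maxHeartbeats 1000000 in
lemma Teq_fzpow_mk (n : ℤ) (ξ : ι → M) (S : ι) :
    Teq (M := M) (m := m) f (fzpow f n (LocalizedModule.mk ξ 1)) S
      = fzpow f (n - S.card) (LocalizedModule.mk (ξ S) 1) := by
  rw [fzpow_apply, Teq_loc_smul, Pi.smul_apply, Teq_apply, locPiEquiv_mk]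
  show ((fUnit f ^ n : (Localization Sf)ˣ) : Localization Sf) •
      fzpow f (-(S.card : ℤ)) (LocalizedModule.mk (ξ S) 1) = _
  rw [← fzpow_apply, fzpow_fzpow, show n + -(S.card : ℤ) = n - S.card by omega]

/-- `locDiff` through `mkL`. -/
lemma locDiff_mkL (d : M →ₗ[A] M) (s : Sf) (x : M) :
    locDiff f d (mkL f s x) = mkL f s (d x) := locDiff_mk f d x s

/-- Key intertwining: `Teq` conjugates the localized `g`-Koszul differential into the
`h = g/f`-Koszul differential on the localized complex. -/
lemma Teq_locDiff (d : M →ₗ[A] M) (g h : Fin m → A) (hfh : ∀ i, f * h i = g i)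
    (x : LocalizedModule Sf (ι → M)) :
    Teq (M := M) (m := m) f (locDiff f (koszulD d g) x) = koszulD (locDiff f d) h (Teq (M := M) (m := m) f x) := by
  induction x using LocalizedModule.induction_on with
  | _ ξ s =>
    funext S
    rw [locDiff_mk]
    simp only [Teq_apply, locPiEquiv_mk, koszulD_apply]
    simp only [← mkL_apply f s, map_add, map_smul, map_sum, locDiff_fzpow, locDiff_mkL]
    congr 1
    refine Finset.sum_congr rfl fun i hi => ?_
    have hcard : ((S.erase i).card : ℤ) = (S.card : ℤ) - 1 := by
      rw [Finset.card_erase_of_mem hi]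
      have : 1 ≤ S.card := Finset.card_pos.mpr ⟨i, hi⟩
      omega
    rw [hcard, mul_smul, mul_smul, ← hfh i, mul_comm f (h i), mul_smul]
    congr 1
    rw [f_smul_fzpow, show -(S.card : ℤ) + 1 = -((S.card : ℤ) - 1) by omega]

end Compare

section Main

variable {A : Type u} [CommRing A] (f : A) {M : Type u} [AddCommGroup M] [Module A M] {m : ℕ}

local notation "Sf" => Submonoid.powers f
local notation "LocM" => LocalizedModule (Submonoid.powers f) M
local notation "ι" => Finset (Fin m)

lemma mem_koszulGrading {N : Type u} [AddCommGroup N] [Module A N] (G : ℤ → Submodule A N)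
    (n : ℤ) (ξ : ι → N) : ξ ∈ koszulGrading G n ↔ ∀ S : ι, ξ S ∈ G (n - S.card) := Iff.rfl

lemma neg_one_pow_smul_mem_iff {N : Type u} [AddCommGroup N] [Module A N]
    (p : Submodule A N) (k : ℕ) (z : N) : ((-1 : A) ^ k) • z ∈ p ↔ z ∈ p := by
  constructor
  · intro hz
    have hzz : z = ((-1 : A) ^ k) • (((-1 : A) ^ k) • z) := by
      rw [smul_smul, ← mul_pow, neg_mul_neg, one_mul, one_pow, one_smul]
    rw [hzz]
    exact p.smul_mem _ hz
  · exact fun hz => p.smul_mem _ hz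

lemma graded_piece_iff (G : ℤ → Submodule A M) (n : ℤ) (x : LocalizedModule Sf (ι → M)) :
    x ∈ (koszulGrading G n).map
        ((fzpow f n).comp (LocalizedModule.mkLinearMap Sf (ι → M))) ↔
    ∀ S : ι, Teq (M := M) (m := m) f x S ∈ (G (n - S.card)).map
        ((fzpow f (n - S.card)).comp (LocalizedModule.mkLinearMap Sf M)) := by
  constructor
  · rintro ⟨ξ, hξ, rfl⟩ S
    refine ⟨ξ S, hξ S, ?_⟩
    simp only [LinearMap.comp_apply, LocalizedModule.mkLinearMap_apply]
    exact (Teq_fzpow_mk f n ξ S).symm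
  · intro hx
    choose y hy hy2 using hx
    refine ⟨fun S => y S, fun S => hy S, ?_⟩
    apply (Teq (M := M) (m := m) f).injective
    funext S
    simp only [LinearMap.comp_apply, LocalizedModule.mkLinearMap_apply]
    rw [Teq_fzpow_mk]
    have := hy2 S
    simpa only [LinearMap.comp_apply, LocalizedModule.mkLinearMap_apply] using this

lemma koszul_sum_mem (G : ℤ → Submodule A M) (h : Fin m → A) (n : ℤ)
    (x : LocalizedModule Sf (ι → M))
    (hfirst : ∀ T : ι, Teq (M := M) (m := m) f x T ∈ (G (n - T.card)).map
      ((fzpow f (n - T.card)).comp (LocalizedModule.mkLinearMap Sf M))) (S : ι) :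
    (∑ i ∈ S, (((-1 : A) ^ (S.filter fun j => j < i).card) * h i) • Teq (M := M) (m := m) f x (S.erase i))
      ∈ (G (n + 1 - S.card)).map
        ((fzpow f (n + 1 - S.card)).comp (LocalizedModule.mkLinearMap Sf M)) := by
  refine Submodule.sum_mem _ fun i hi => Submodule.smul_mem _ _ ?_
  have hcard : n - ((S.erase i).card : ℤ) = n + 1 - S.card := by
    rw [Finset.card_erase_of_mem hi]
    have : 1 ≤ S.card := Finset.card_pos.mpr ⟨i, hi⟩
    omega
  have := hfirst (S.erase i)
  rwa [hcard] at this

/-- Key membership transport: `x` lies in the degree-`n` piece of `η_f(M ⊗ Kos(g))` iff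
all components of `Teq (M := M) (m := m) f x` lie in the corresponding pieces of `η_f(M)`. -/
lemma memEta_iff (d : M →ₗ[A] M) (G : ℤ → Submodule A M) (g h : Fin m → A)
    (hfh : ∀ i, f * h i = g i) (n : ℤ) (x : LocalizedModule Sf (ι → M)) :
    x ∈ etaDeg f (koszulD d g) (koszulGrading G) n ↔
    ∀ S : ι, Teq (M := M) (m := m) f x S ∈ etaDeg f d G (n - S.card) := by
  simp only [etaDeg, Submodule.mem_inf, Submodule.mem_comap]
  rw [graded_piece_iff f G n x, graded_piece_iff f G (n + 1) (locDiff f (koszulD d g) x),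
    Teq_locDiff f d g h hfh]
  constructor
  · rintro ⟨h1, h2⟩ S
    refine ⟨h1 S, ?_⟩
    have h2S := h2 S
    rw [koszulD_apply, Submodule.add_mem_iff_left _ (koszul_sum_mem f G h n x h1 S),
      neg_one_pow_smul_mem_iff] at h2S
    rw [show n - (S.card : ℤ) + 1 = n + 1 - S.card by omega]
    exact h2S
  · intro hx
    refine ⟨fun S => (hx S).1, fun S => ?_⟩
    rw [koszulD_apply, Submodule.add_mem_iff_left _
        (koszul_sum_mem f G h n x (fun T => (hx T).1) S),
      neg_one_pow_smul_mem_iff]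
    have := (hx S).2
    rwa [show n - (S.card : ℤ) + 1 = n + 1 - S.card by omega] at this

lemma locDiff_locDiff (d : M →ₗ[A] M) (hdd : d.comp d = 0) (x : LocM) :
    locDiff f d (locDiff f d x) = 0 := by
  induction x using LocalizedModule.induction_on with
  | _ mm s =>
    rw [locDiff_mk, locDiff_mk, show d (d mm) = 0 from LinearMap.congr_fun hdd mm,
      LocalizedModule.zero_mk]

lemma etaDeg_locDiff (d : M →ₗ[A] M) (G : ℤ → Submodule A M) (hdd : d.comp d = 0) (k : ℤ)
    (x : LocM) (hx : x ∈ etaDeg f d G k) : locDiff f d x ∈ etaDeg f d G (k + 1) := by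
  obtain ⟨-, h2⟩ := Submodule.mem_inf.mp hx
  refine Submodule.mem_inf.mpr ⟨Submodule.mem_comap.mp h2, Submodule.mem_comap.mpr ?_⟩
  rw [locDiff_locDiff f d hdd x]
  exact Submodule.zero_mem _

end Main


set_option maxHeartbeats 2000000 in
/-- **Bhatt–Morrow–Scholze, Lemma 7.9 (ii).** Let `A` be a commutative ring and let
`f, g₁, …, g_m ∈ A` be non-zero-divisors with `f ∣ gᵢ` for all `i`, say `gᵢ = f·hᵢ`
(`hᵢ = gᵢ/f` is unique since `f` is a non-zero-divisor). Let `M•` be an `f`-torsion-free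
cochain complex of `A`-modules (presented as a graded module `(M, G)` with differential `d`).
Then there is an isomorphism of cochain complexes of `A`-modules
`η_f(M• ⊗_A Kos_A(g₁, …, g_m)) ≅ η_f(M•) ⊗_A Kos_A(g₁/f, …, g_m/f)`:
both sides are subcomplexes (with degreewise pieces `etaDeg`/`koszulGrading (etaDeg ...)`
preserved by the respective differentials), and there are degreewise `A`-linear isomorphisms
commuting with the differentials. -/
theorem eta_koszul_iso
    {A : Type u} [CommRing A] (f : A) (hf : ∀ a : A, f * a = 0 → a = 0)
    {m : ℕ} (g : Fin m → A) (hg : ∀ i : Fin m, ∀ a : A, g i * a = 0 → a = 0)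
    (h : Fin m → A) (hfh : ∀ i : Fin m, f * h i = g i)
    {M : Type u} [AddCommGroup M] [Module A M]
    (d : M →ₗ[A] M) (G : ℤ → Submodule A M)
    (hG : DirectSum.IsInternal G)
    (hdG : ∀ n : ℤ, (G n).map d ≤ G (n + 1))
    (hdd : d.comp d = 0)
    (htf : ∀ x : M, f • x = 0 → x = 0) :
    ∃ (hL : ∀ n : ℤ, ∀ α ∈ etaDeg f (koszulD d g) (koszulGrading G) n,
        locDiff f (koszulD d g) α ∈ etaDeg f (koszulD d g) (koszulGrading G) (n + 1))
      (hR : ∀ n : ℤ, ∀ ξ ∈ koszulGrading (m := m) (etaDeg f d G) n,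
        koszulD (locDiff f d) h ξ ∈ koszulGrading (etaDeg f d G) (n + 1))
      (Φ : ∀ n : ℤ, ↥(etaDeg f (koszulD d g) (koszulGrading G) n) ≃ₗ[A]
        ↥(koszulGrading (m := m) (etaDeg f d G) n)),
      ∀ (n : ℤ) (α : ↥(etaDeg f (koszulD d g) (koszulGrading G) n)),
        ((Φ (n + 1) ⟨locDiff f (koszulD d g) (α : _), hL n α α.2⟩ : _) :
            Finset (Fin m) → LocalizedModule (Submonoid.powers f) M) =
          koszulD (locDiff f d) h ((Φ n α : _) :
            Finset (Fin m) → LocalizedModule (Submonoid.powers f) M) := by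
  classical
  have hR : ∀ n : ℤ, ∀ ξ ∈ koszulGrading (m := m) (etaDeg f d G) n,
      koszulD (locDiff f d) h ξ ∈ koszulGrading (etaDeg f d G) (n + 1) := by
    intro n ξ hξ
    rw [mem_koszulGrading]
    intro S
    rw [koszulD_apply]
    refine Submodule.add_mem _ (Submodule.smul_mem _ _ ?_)
      (Submodule.sum_mem _ fun i hi => Submodule.smul_mem _ _ ?_)
    · have := etaDeg_locDiff f d G hdd (n - S.card) (ξ S) ((mem_koszulGrading _ n ξ).mp hξ S)
      rwa [show n - (S.card : ℤ) + 1 = n + 1 - S.card by omega] at this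
    · have hcard : n - ((S.erase i).card : ℤ) = n + 1 - S.card := by
        rw [Finset.card_erase_of_mem hi]
        have : 1 ≤ S.card := Finset.card_pos.mpr ⟨i, hi⟩
        omega
      have := (mem_koszulGrading _ n ξ).mp hξ (S.erase i)
      rwa [hcard] at this
  have hL : ∀ n : ℤ, ∀ α ∈ etaDeg f (koszulD d g) (koszulGrading G) n,
      locDiff f (koszulD d g) α ∈ etaDeg f (koszulD d g) (koszulGrading G) (n + 1) := by
    intro n α hα
    rw [memEta_iff f d G g h hfh]
    intro S
    have h1 := (memEta_iff f d G g h hfh n α).mp hα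
    have h3 := hR n (Teq (M := M) (m := m) f α) ((mem_koszulGrading _ n (Teq (M := M) (m := m) f α)).mpr h1)
    rw [Teq_locDiff f d g h hfh]
    exact (mem_koszulGrading _ (n + 1) _).mp h3 S
  have hmap : ∀ n : ℤ,
      (etaDeg f (koszulD d g) (koszulGrading G) n).map
        (Teq (M := M) (m := m) f).toLinearMap = koszulGrading (etaDeg f d G) n := by
    intro n
    ext x
    rw [Submodule.mem_map]
    constructor
    · rintro ⟨α, hα, rfl⟩
      exact (mem_koszulGrading _ n _).mpr ((memEta_iff f d G g h hfh n α).mp hα)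
    · intro hx
      refine ⟨(Teq (M := M) (m := m) f).symm x, ?_, (Teq (M := M) (m := m) f).apply_symm_apply x⟩
      rw [memEta_iff f d G g h hfh]
      intro S
      rw [(Teq (M := M) (m := m) f).apply_symm_apply]
      exact (mem_koszulGrading _ n x).mp hx S
  refine ⟨hL, hR, fun n =>
    ((Teq (M := M) (m := m) f).submoduleMap (etaDeg f (koszulD d g) (koszulGrading G) n)).trans
      (LinearEquiv.ofEq _ _ (hmap n)), ?_⟩
  intro n α
  show Teq (M := M) (m := m) f (locDiff f (koszulD d g) (α : LocalizedModule (Submonoid.powers f)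
      (Finset (Fin m) → M))) = koszulD (locDiff f d) h (Teq (M := M) (m := m) f (α : _))
  exact Teq_locDiff f d g h hfh _
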